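/- Let F be the free group on three generators α, β, γ, let Ψ : F → F be the group endomorphism determined by Ψ(α)=γαβ, Ψ(β)=γβα⁻¹γαβ, Ψ(γ)=γαβα⁻¹γβ, and let C₂ be a group with exactly two elements. Then for each generator x ∈ {α, β, γ} there exists a group homomorphism f : F → C₂ such that f(Ψⁿ(x)) ≠ f(x) for every n ≥ 1. -/
import Mathlib


namespace Stmt15

/-- The generator α of the free group on three generators. -/
def α : FreeGroup (Fin 3) := FreeGroup.of 0
/-- The generator β of the free group on three generators. -/
def β : FreeGroup (Fin 3) := FreeGroup.of 1
/-- The generator γ of the free group on three generators. -/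
def γ : FreeGroup (Fin 3) := FreeGroup.of 2

/-- The endomorphism Ψ of the free group on α, β, γ determined by
Ψ(α)=γαβ, Ψ(β)=γβα⁻¹γαβ, Ψ(γ)=γαβα⁻¹γβ. -/
def Ψ : FreeGroup (Fin 3) →* FreeGroup (Fin 3) :=
  FreeGroup.lift ![γ * α * β, γ * β * α⁻¹ * γ * α * β, γ * α * β * α⁻¹ * γ * β]

/-- for a two-element group `C₂`, for each generator `x ∈ {α, β, γ}` there is a
homomorphism `f` from the free group on α, β, γ to `C₂` with `f(Ψⁿ(x)) ≠ f(x)` for all `n ≥ 1`. -/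
theorem stmt15 {C₂ : Type*} [Group C₂] (hcard : Nat.card C₂ = 2) :
    ∀ x ∈ ({α, β, γ} : Set (FreeGroup (Fin 3))),
      ∃ f : FreeGroup (Fin 3) →* C₂, ∀ n : ℕ, 1 ≤ n → f ((⇑Ψ)^[n] x) ≠ f x := by
  have hfin : Finite C₂ := Nat.finite_of_card_ne_zero (by omega)
  have hnt : Nontrivial C₂ := Finite.one_lt_card_iff_nontrivial.mp (by omega)
  obtain ⟨g, hg⟩ := exists_ne (1 : C₂)
  have hg2 : g * g = 1 := by
    have := pow_card_eq_one' (G := C₂) (x := g)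
    rwa [hcard, pow_two] at this
  set F : FreeGroup (Fin 3) →* C₂ := FreeGroup.lift ![g, 1, 1] with hF
  have hFΨ : F.comp Ψ = F := by
    apply FreeGroup.ext_hom
    intro a
    fin_cases a <;> simp [Ψ, F, α, β, γ, hg2]
  have hFiter : ∀ (w : FreeGroup (Fin 3)) (n : ℕ), F ((⇑Ψ)^[n] w) = F w := by
    intro w n
    induction n with
    | zero => rfl
    | succ m ih =>
      rw [Function.iterate_succ_apply', ← MonoidHom.comp_apply, hFΨ, ih]
  have key : ∀ (f : FreeGroup (Fin 3) →* C₂), f.comp Ψ = F →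
      ∀ (x : FreeGroup (Fin 3)) (n : ℕ), 1 ≤ n → f ((⇑Ψ)^[n] x) = F x := by
    intro f hf x n hn
    obtain ⟨m, rfl⟩ := Nat.exists_eq_add_of_le hn
    rw [add_comm, Function.iterate_succ_apply', ← MonoidHom.comp_apply, hf, hFiter]
  rintro x (rfl | rfl | rfl)
  · -- x = α, take f = lift ![1, g, 1]
    refine ⟨FreeGroup.lift ![1, g, 1], ?_⟩
    intro n hn
    have hc : (FreeGroup.lift ![1, g, 1]).comp Ψ = F := by
      apply FreeGroup.ext_hom
      intro a
      fin_cases a <;> simp [Ψ, F, α, β, γ, hg2]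
    rw [key _ hc _ n hn]
    simpa [F, α] using hg
  · -- x = β, take f = lift ![1, g, 1]
    refine ⟨FreeGroup.lift ![1, g, 1], ?_⟩
    intro n hn
    have hc : (FreeGroup.lift ![1, g, 1]).comp Ψ = F := by
      apply FreeGroup.ext_hom
      intro a
      fin_cases a <;> simp [Ψ, F, α, β, γ, hg2]
    rw [key _ hc _ n hn]
    simpa [F, β] using hg.symm
  · -- x = γ, take f = lift ![1, 1, g]
    refine ⟨FreeGroup.lift ![1, 1, g], ?_⟩
    intro n hn
    have hc : (FreeGroup.lift ![1, 1, g]).comp Ψ = F := by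
      apply FreeGroup.ext_hom
      intro a
      fin_cases a <;> simp [Ψ, F, α, β, γ, hg2]
    rw [key _ hc _ n hn]
    simpa [F, γ] using hg.symm

end Stmt15
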